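/- Let f be analytic in the open unit disc Δ = {z ∈ ℂ : |z| < 1} with f(0) = 0 and f′(0) = 1, and suppose f(z) ≠ 0 for all z ∈ Δ with z ≠ 0. If f is starlike of order 1/2, i.e. Re(z·f′(z)/f(z)) > 1/2 for all z ∈ Δ with z ≠ 0, then |z/f(z) − 1| < 1 for all z ∈ Δ with z ≠ 0. -/

import Mathlib

open Complex Metric

-- Key lemma: Jack-lemma style argument.
lemma omega_lt_one_of_re_lt_half (ω : ℂ → ℂ) (hω : DifferentiableOn ℂ ω (ball (0:ℂ) 1))
    (hω0 : ω 0 = 0) (hne : ∀ w ∈ ball (0:ℂ) 1, 1 + ω w ≠ 0)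
    (hst : ∀ w ∈ ball (0:ℂ) 1, w ≠ 0 → (w * deriv ω w / (1 + ω w)).re < 1 / 2) :
    ∀ w ∈ ball (0:ℂ) 1, ‖(ω w)‖ < 1 := by
  by_contra hcon
  push_neg at hcon
  obtain ⟨z₁, hz₁, hz₁1⟩ := hcon
  set r₁ := ‖z₁‖ with hr₁def
  have hr₁ : r₁ < 1 := mem_ball_zero_iff.mp hz₁
  have hr₁0 : 0 ≤ r₁ := norm_nonneg z₁
  have hKsub : closedBall (0:ℂ) r₁ ⊆ ball 0 1 := closedBall_subset_ball hr₁
  set A : Set ℂ := {w ∈ closedBall (0:ℂ) r₁ | 1 ≤ ‖(ω w)‖} with hAdef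
  have hAcomp : IsCompact A := by
    have hcont : ContinuousOn (fun u => ‖(ω u)‖) (closedBall (0:ℂ) r₁) :=
      continuous_norm.comp_continuousOn ((hω.continuousOn).mono hKsub)
    have hclosed : IsClosed A := by
      have hAeq : A = closedBall (0:ℂ) r₁ ∩ (fun u => ‖(ω u)‖) ⁻¹' (Set.Ici 1) := by
        ext u
        simp [hAdef, Set.mem_setOf_eq]
      rw [hAeq]
      exact hcont.preimage_isClosed_of_isClosed isClosed_closedBall isClosed_Ici
    exact (isCompact_closedBall (0:ℂ) r₁).of_isClosed_subset hclosed (fun u hu => hu.1)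
  have hAne : A.Nonempty := ⟨z₁, by simp [hAdef, mem_closedBall_zero_iff, hr₁def], hz₁1⟩
  obtain ⟨z₀, hz₀A, hz₀min⟩ := hAcomp.exists_isMinOn hAne (continuous_norm.continuousOn)
  rw [isMinOn_iff] at hz₀min
  set r := ‖z₀‖ with hrdef
  have hz₀K : z₀ ∈ closedBall (0:ℂ) r₁ := hz₀A.1
  have hz₀ω : 1 ≤ ‖(ω z₀)‖ := hz₀A.2
  have hz₀ne : z₀ ≠ 0 := by
    rintro rfl
    rw [hω0] at hz₀ω
    simp only [norm_zero] at hz₀ω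
    linarith
  have hrpos : 0 < r := by simpa [hrdef] using hz₀ne
  have hrr₁ : r ≤ r₁ := mem_closedBall_zero_iff.mp hz₀K
  have hz₀ball : z₀ ∈ ball (0:ℂ) 1 := hKsub hz₀K
  -- strict bound inside radius r
  have hlt : ∀ u : ℂ, ‖u‖ < r → ‖(ω u)‖ < 1 := by
    intro u hu
    by_contra h
    push_neg at h
    have huA : u ∈ A := ⟨mem_closedBall_zero_iff.mpr (le_of_lt (lt_of_lt_of_le hu hrr₁)), h⟩
    have := hz₀min u huA
    exact absurd hu (not_lt.mpr this)
  -- weak bound on closed ball of radius r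
  have hle : ∀ u : ℂ, ‖u‖ ≤ r → ‖(ω u)‖ ≤ 1 := by
    intro u hu
    have hcont : ContinuousAt (fun t : ℝ => ‖(ω ((t : ℂ) * u))‖) 1 := by
      have h1 : ContinuousAt (fun t : ℝ => (t : ℂ) * u) 1 :=
        (Complex.continuous_ofReal.mul continuous_const).continuousAt
      have h2 : ContinuousAt ω (((1 : ℝ) : ℂ) * u) := by
        apply (hω.differentiableAt (isOpen_ball.mem_nhds ?_)).continuousAt
        simp only [ofReal_one, one_mul]
        rw [mem_ball_zero_iff]
        exact lt_of_le_of_lt (hu.trans hrr₁) hr₁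
      have h3 : ContinuousAt (fun t : ℝ => ω ((t : ℂ) * u)) 1 := ContinuousAt.comp (g := ω) h2 h1
      exact ContinuousAt.comp (g := fun x : ℂ => ‖x‖) continuous_norm.continuousAt h3
    have hlim : Filter.Tendsto (fun t : ℝ => ‖(ω ((t : ℂ) * u))‖) (nhdsWithin 1 (Set.Iio 1)) (nhds (‖(ω u)‖)) := by
      have := hcont.continuousWithinAt (s := Set.Iio (1:ℝ))
      simpa using this.tendsto
    refine le_of_tendsto hlim ?_
    filter_upwards [Ioo_mem_nhdsLT_of_mem (Set.mem_Ioc.mpr ⟨zero_lt_one, le_refl (1:ℝ)⟩)] with t ht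
    apply le_of_lt
    apply hlt
    rw [norm_mul]
    calc ‖(t : ℂ)‖ * ‖u‖ = t * ‖u‖ := by
          rw [Complex.norm_real, Real.norm_eq_abs, abs_of_pos ht.1]
      _ ≤ t * r := by
          apply mul_le_mul_of_nonneg_left hu (le_of_lt ht.1)
      _ < 1 * r := by
          apply mul_lt_mul_of_pos_right ht.2 hrpos
      _ = r := one_mul r
  have hz₀abs : ‖(ω z₀)‖ = 1 := le_antisymm (hle z₀ le_rfl) hz₀ω
  -- Schwarz lemma
  have hSch : ∀ t : ℝ, t ∈ Set.Ioo (0:ℝ) 1 → ‖(ω ((t : ℂ) * z₀))‖ ≤ t := by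
    intro t ht
    have hmaps : Set.MapsTo ω (ball (0:ℂ) r) (ball (ω 0) 1) := by
      intro u hu
      rw [hω0, mem_ball_zero_iff]
      exact hlt u (mem_ball_zero_iff.mp hu)
    have hd : DifferentiableOn ℂ ω (ball (0:ℂ) r) :=
      hω.mono (ball_subset_ball (le_of_lt (lt_of_le_of_lt hrr₁ hr₁)))
    have hmem : (t : ℂ) * z₀ ∈ ball (0:ℂ) r := by
      rw [mem_ball_zero_iff, norm_mul, Complex.norm_real, Real.norm_eq_abs, abs_of_pos ht.1]
      calc t * ‖z₀‖ = t * r := rfl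
        _ < 1 * r := mul_lt_mul_of_pos_right ht.2 hrpos
        _ = r := one_mul r
    have := Complex.dist_le_div_mul_dist_of_mapsTo_ball hd (hmaps.mono_right ball_subset_closedBall) hmem
    rw [hω0] at this
    simp only [dist_zero_right] at this
    calc ‖(ω ((t:ℂ) * z₀))‖ ≤ 1 / r * ‖((t:ℂ) * z₀)‖ := this
      _ = t := by
          rw [norm_mul, Complex.norm_real, Real.norm_eq_abs, abs_of_pos ht.1, ← hrdef]
          field_simp
  -- notation
  set w := ω z₀ with hwdef
  set D := deriv ω z₀ with hDdef
  have hωd : HasDerivAt ω D z₀ :=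
    (hω.differentiableAt (isOpen_ball.mem_nhds hz₀ball)).hasDerivAt
  have hnw : Complex.normSq w = 1 := by
    rw [← Complex.sq_norm, hz₀abs, one_pow]
  -- (i) radial derivative bound
  have hki : 1 ≤ (D * z₀ * (starRingEnd ℂ) w).re := by
    have hinner : HasDerivAt (fun u : ℂ => ω (u * z₀)) (D * z₀) 1 := by
      have hm : HasDerivAt (fun u : ℂ => u * z₀) z₀ 1 := hasDerivAt_mul_const z₀
      have hω1 : HasDerivAt ω D ((1:ℂ) * z₀) := by rwa [one_mul]
      exact HasDerivAt.comp (1:ℂ) hω1 hm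
    have hF : HasDerivAt (fun u : ℂ => ω (u * z₀) * (starRingEnd ℂ) w)
        (D * z₀ * (starRingEnd ℂ) w) 1 := hinner.mul_const _
    have hF' : HasDerivAt (fun t : ℝ => ω ((t:ℂ) * z₀) * (starRingEnd ℂ) w)
        (D * z₀ * (starRingEnd ℂ) w) 1 := hF.comp_ofReal
    set φ : ℝ → ℝ := fun t => (ω ((t:ℂ) * z₀) * (starRingEnd ℂ) w).re with hφdef
    have hu : HasDerivAt φ ((D * z₀ * (starRingEnd ℂ) w).re) 1 :=
      Complex.reCLM.hasFDerivAt.comp_hasDerivAt 1 hF'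
    have hφ1 : φ 1 = 1 := by
      simp only [hφdef, Complex.ofReal_one, one_mul, ← hwdef, Complex.mul_conj, hnw]
      norm_num
    have hslope : ∀ t ∈ Set.Ioo (0:ℝ) 1, 1 ≤ slope φ 1 t := by
      intro t ht
      have hφt : φ t ≤ t := by
        have h1 : φ t ≤ ‖(ω ((t:ℂ) * z₀) * (starRingEnd ℂ) w)‖ :=
          Complex.re_le_norm _
        rw [norm_mul, Complex.norm_conj, hz₀abs, mul_one] at h1
        exact h1.trans (hSch t ht)
      rw [slope_def_field, hφ1, le_div_iff_of_neg (by linarith [ht.2] : t - 1 < 0)]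
      linarith
    have htend : Filter.Tendsto (slope φ 1) (nhdsWithin 1 (Set.Iio 1))
        (nhds ((D * z₀ * (starRingEnd ℂ) w).re)) :=
      (hasDerivAt_iff_tendsto_slope.mp hu).mono_left
        (nhdsWithin_mono 1 (fun x hx => ne_of_lt hx))
    refine ge_of_tendsto htend ?_
    filter_upwards [Ioo_mem_nhdsLT_of_mem (Set.mem_Ioc.mpr ⟨zero_lt_one, le_refl (1:ℝ)⟩)] with t ht
    exact hslope t ht
  -- (ii) tangential derivative zero
  have hkii : (D * (z₀ * I) * (starRingEnd ℂ) w).re = 0 := by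
    have hexp : HasDerivAt (fun u : ℂ => Complex.exp (u * I)) I 0 := by
      have := (hasDerivAt_mul_const (x := (0:ℂ)) (I : ℂ)).cexp
      simpa using this
    have hinner : HasDerivAt (fun u : ℂ => z₀ * Complex.exp (u * I)) (z₀ * I) 0 := by
      have := hexp.const_mul z₀
      simpa [mul_comm] using this
    have hω1 : HasDerivAt ω D (z₀ * Complex.exp ((0:ℂ) * I)) := by
      rwa [zero_mul, Complex.exp_zero, mul_one]
    have hcomp : HasDerivAt (fun u : ℂ => ω (z₀ * Complex.exp (u * I))) (D * (z₀ * I)) 0 :=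
      HasDerivAt.comp (0:ℂ) hω1 hinner
    have hG : HasDerivAt (fun u : ℂ => ω (z₀ * Complex.exp (u * I)) * (starRingEnd ℂ) w)
        (D * (z₀ * I) * (starRingEnd ℂ) w) 0 := hcomp.mul_const _
    have hG' : HasDerivAt (fun θ : ℝ => ω (z₀ * Complex.exp ((θ:ℂ) * I)) * (starRingEnd ℂ) w)
        (D * (z₀ * I) * (starRingEnd ℂ) w) 0 := by
      have := hG.comp_ofReal
      simpa using this
    set q : ℝ → ℝ := fun θ => (ω (z₀ * Complex.exp ((θ:ℂ) * I)) * (starRingEnd ℂ) w).re with hqdef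
    have hq : HasDerivAt q ((D * (z₀ * I) * (starRingEnd ℂ) w).re) 0 :=
      Complex.reCLM.hasFDerivAt.comp_hasDerivAt 0 hG'
    have hq0 : q 0 = 1 := by
      simp only [hqdef, Complex.ofReal_zero, zero_mul, Complex.exp_zero, mul_one, ← hwdef,
        Complex.mul_conj, hnw]
      norm_num
    have hmax : IsLocalMax q 0 := by
      apply Filter.Eventually.of_forall
      intro θ
      have h1 : q θ ≤ ‖(ω (z₀ * Complex.exp ((θ:ℂ) * I)) * (starRingEnd ℂ) w)‖ :=
        Complex.re_le_norm _
      rw [norm_mul, Complex.norm_conj, hz₀abs, mul_one] at h1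
      have h2 : ‖(ω (z₀ * Complex.exp ((θ:ℂ) * I)))‖ ≤ 1 := by
        apply hle
        rw [norm_mul, Complex.norm_exp_ofReal_mul_I, mul_one]
      rw [hq0]
      exact h1.trans h2
    have hder := hmax.deriv_eq_zero
    rwa [hq.deriv] at hder
  -- combine
  set δ := D * z₀ * (starRingEnd ℂ) w with hδdef
  have hδim : δ.im = 0 := by
    have : (D * (z₀ * I) * (starRingEnd ℂ) w) = δ * I := by ring
    rw [this] at hkii
    simpa [Complex.mul_re] using hkii
  have hδ : δ = ((δ.re : ℝ) : ℂ) := by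
    rw [← Complex.re_add_im δ, hδim]
    simp
  have hdw : z₀ * D = δ * w := by
    have h1 : (starRingEnd ℂ) w * w = 1 := by
      rw [mul_comm, Complex.mul_conj, hnw, Complex.ofReal_one]
    calc z₀ * D = D * z₀ * ((starRingEnd ℂ) w * w) := by rw [h1]; ring
      _ = δ * w := by rw [hδdef]; ring
  -- final contradiction
  have hfin := hst z₀ hz₀ball hz₀ne
  rw [← hDdef, hdw, hδ] at hfin
  set k := δ.re with hkdef
  have hwhalf : (w / (1 + w)).re = 1 / 2 := by
    have hs : (1 : ℂ) + w ≠ 0 := hne z₀ hz₀ball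
    have hN : 0 < Complex.normSq (1 + w) := Complex.normSq_pos.mpr hs
    have hnw' : w.re * w.re + w.im * w.im = 1 := by
      simpa [Complex.normSq_apply] using hnw
    have hNval : Complex.normSq (1 + w) = 2 + 2 * w.re := by
      simp only [Complex.normSq_apply, Complex.add_re, Complex.add_im, Complex.one_re,
        Complex.one_im]
      nlinarith
    have h1 : (0:ℝ) < 2 + 2 * w.re := hNval ▸ hN
    rw [Complex.div_re, hNval]
    simp only [Complex.add_re, Complex.add_im, Complex.one_re, Complex.one_im]
    field_simp
    rw [div_eq_one_iff_eq (by linarith)]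
    nlinarith
  have : ((k : ℂ) * w / (1 + w)).re = k * (1 / 2) := by
    rw [mul_div_assoc, Complex.mul_re]
    simp [hwhalf]
  rw [this] at hfin
  have : (1:ℝ) ≤ k := hki
  nlinarith

theorem z_div_f_near_one_of_starlike_half (f : ℂ → ℂ)
    (hf : DifferentiableOn ℂ f (ball (0:ℂ) 1))
    (hf0 : f 0 = 0) (hf'0 : deriv f 0 = 1)
    (hfne : ∀ z ∈ ball (0:ℂ) 1, z ≠ 0 → f z ≠ 0)
    (hstar : ∀ z ∈ ball (0:ℂ) 1, z ≠ 0 → 1 / 2 < (z * deriv f z / f z).re) :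
    ∀ z ∈ ball (0:ℂ) 1, z ≠ 0 → ‖(z / f z - 1)‖ < 1 := by
  have hball : (ball (0:ℂ) 1) ∈ nhds (0:ℂ) := isOpen_ball.mem_nhds (by simp)
  set g : ℂ → ℂ := dslope f 0 with hgdef
  have hg : DifferentiableOn ℂ g (ball 0 1) := (Complex.differentiableOn_dslope hball).mpr hf
  have hg0 : g 0 = 1 := by rw [hgdef, dslope_same, hf'0]
  have hgz : ∀ u : ℂ, u ≠ 0 → g u = f u / u := by
    intro u hu
    rw [hgdef, dslope_of_ne _ hu, slope_def_field, hf0, sub_zero, sub_zero]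
  have hfg : ∀ u : ℂ, f u = u * g u := by
    intro u
    have := sub_smul_dslope f 0 u
    simp only [sub_zero, smul_eq_mul, hf0] at this
    rw [← hgdef] at this
    linear_combination -this
  have hgne : ∀ u ∈ ball (0:ℂ) 1, g u ≠ 0 := by
    intro u hu
    rcases eq_or_ne u 0 with rfl | hu0
    · rw [hg0]; exact one_ne_zero
    · rw [hgz u hu0]; exact div_ne_zero (hfne u hu hu0) hu0
  set ω : ℂ → ℂ := fun u => (g u)⁻¹ - 1 with hωdef
  have hω : DifferentiableOn ℂ ω (ball 0 1) := (hg.inv hgne).sub_const 1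
  have hω0 : ω 0 = 0 := by simp [hωdef, hg0]
  have hone : ∀ u : ℂ, 1 + ω u = (g u)⁻¹ := by intro u; simp [hωdef]
  have hne : ∀ u ∈ ball (0:ℂ) 1, 1 + ω u ≠ 0 := by
    intro u hu
    rw [hone]
    exact inv_ne_zero (hgne u hu)
  have hst : ∀ u ∈ ball (0:ℂ) 1, u ≠ 0 → (u * deriv ω u / (1 + ω u)).re < 1 / 2 := by
    intro u hu hu0
    have hgd : HasDerivAt g (deriv g u) u :=
      (hg.differentiableAt (isOpen_ball.mem_nhds hu)).hasDerivAt
    have hωd : HasDerivAt ω (-deriv g u / g u ^ 2) u := (hgd.inv (hgne u hu)).sub_const 1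
    have hfd : HasDerivAt f (g u + u * deriv g u) u := by
      have h1 : HasDerivAt (fun v : ℂ => v * g v) (1 * g u + u * deriv g u) u :=
        (hasDerivAt_id u).mul hgd
      rw [one_mul] at h1
      have : f = fun v : ℂ => v * g v := funext hfg
      rw [this]
      exact h1
    have key : u * deriv ω u / (1 + ω u) = 1 - u * deriv f u / f u := by
      rw [hωd.deriv, hone, hfd.deriv, hfg u]
      have hgu := hgne u hu
      field_simp
      ring
    rw [key]
    have := hstar u hu hu0
    have hre : (1 - u * deriv f u / f u).re = 1 - (u * deriv f u / f u).re := by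
      simp [Complex.sub_re]
    rw [hre]
    linarith
  have hmain := omega_lt_one_of_re_lt_half ω hω hω0 hne hst
  intro z hz hz0
  have heq : z / f z - 1 = ω z := by
    have h2 : (g z)⁻¹ = z / f z := by
      rw [hgz z hz0, inv_div]
    simp only [hωdef, h2]
  rw [heq]
  exact hmain z hz
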